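/- Every finite 2-poset with a least element is homomorphically equivalent to (any of) its longest alternating 2-chains: if P is a finite 2-poset with least element ⊥ and A ⊆ P is a longest alternating chain starting at ⊥, then the map x ↦ a_{d(x)} (sending x to the element of A at position equal to the alternation depth d(x) of x) is a homomorphism P → A, and the inclusion A → P is a homomorphism. -/

import Mathlib

/-- An alternating chain in a 2-poset `(P, ≤, c)`: a strictly increasing sequence
along which the labels alternate. -/
def IsAltChain {P : Type*} [PartialOrder P] (c : P → Bool) {d : ℕ} (a : Fin (d + 1) → P) :
    Prop :=
  StrictMono a ∧ ∀ i : Fin d, c (a i.castSucc) ≠ c (a i.succ)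

/-- The alternation depth of `x`: the length of the longest alternating chain
contained in the interval `[⊥, x]`. -/
noncomputable def altDepth {P : Type*} [PartialOrder P] [OrderBot P] (c : P → Bool)
    (x : P) : ℕ :=
  sSup { d | ∃ a : Fin (d + 1) → P, IsAltChain c a ∧ ∀ i, a i ≤ x }

section Aux

variable {P : Type*} [PartialOrder P] [OrderBot P] (c : P → Bool)

/-- labels along an alternating chain are determined by parity -/
lemma alt_label {d : ℕ} {b : Fin (d + 1) → P} (hb : IsAltChain c b) :
    ∀ n (h : n < d + 1), c (b ⟨n, h⟩) = if Even n then c (b 0) else !(c (b 0)) := by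
  intro n
  induction n with
  | zero => intro h; simp [show (⟨0, h⟩ : Fin (d+1)) = 0 from rfl]
  | succ m ih =>
    intro h
    have hm : m < d := by omega
    have hne := hb.2 ⟨m, hm⟩
    have hcast : (⟨m, hm⟩ : Fin d).castSucc = ⟨m, by omega⟩ := rfl
    have hsucc : (⟨m, hm⟩ : Fin d).succ = ⟨m + 1, h⟩ := rfl
    rw [hcast, hsucc] at hne
    have h2 : c (b ⟨m + 1, h⟩) = !c (b ⟨m, by omega⟩) := by
      revert hne; cases c (b ⟨m + 1, h⟩) <;> cases c (b ⟨m, by omega⟩) <;> simp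
    rw [h2, ih (by omega)]
    by_cases he : Even m <;> simp [he, Nat.even_add_one]

lemma mem_zero (x : P) : 0 ∈ { d | ∃ a : Fin (d + 1) → P, IsAltChain c a ∧ ∀ i, a i ≤ x } :=
  ⟨fun _ => ⊥, ⟨fun i j hij => absurd (Fin.lt_iff_val_lt_val.mp hij) (by omega), fun i => i.elim0⟩, fun _ => bot_le⟩

lemma bdd (s : ℕ)
    (hlongest : ∀ (d : ℕ) (b : Fin (d + 1) → P), IsAltChain c b → d ≤ s) (x : P) :
    s ∈ upperBounds { d | ∃ a : Fin (d + 1) → P, IsAltChain c a ∧ ∀ i, a i ≤ x } := by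
  rintro d ⟨b, hb, -⟩
  exact hlongest d b hb

lemma altDepth_le (s : ℕ)
    (hlongest : ∀ (d : ℕ) (b : Fin (d + 1) → P), IsAltChain c b → d ≤ s) (x : P) :
    altDepth c x ≤ s :=
  csSup_le ⟨0, mem_zero c x⟩ (bdd c s hlongest x)

lemma altDepth_mono (s : ℕ)
    (hlongest : ∀ (d : ℕ) (b : Fin (d + 1) → P), IsAltChain c b → d ≤ s) :
    Monotone (altDepth c) := by
  intro x y hxy
  apply csSup_le_csSup ⟨s, bdd c s hlongest y⟩ ⟨0, mem_zero c x⟩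
  rintro d ⟨b, hb, hle⟩
  exact ⟨b, hb, fun i => (hle i).trans hxy⟩

/-- key label lemma -/
lemma label_eq (s : ℕ) (a : Fin (s + 1) → P) (h0 : a 0 = ⊥) (hchain : IsAltChain c a)
    (hlongest : ∀ (d : ℕ) (b : Fin (d + 1) → P), IsAltChain c b → d ≤ s) (x : P) :
    c (a ⟨altDepth c x, Nat.lt_succ_of_le (altDepth_le c s hlongest x)⟩) = c x := by
  set D := altDepth c x with hD
  have hDs : D ≤ s := altDepth_le c s hlongest x
  obtain ⟨b, hb, hbx⟩ :
      D ∈ { d | ∃ b : Fin (d + 1) → P, IsAltChain c b ∧ ∀ i, b i ≤ x } :=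
    Nat.sSup_mem ⟨0, mem_zero c x⟩ ⟨s, bdd c s hlongest x⟩
  have hnot : ∀ b' : Fin (D + 1 + 1) → P, IsAltChain c b' → (∀ i, b' i ≤ x) → False := by
    intro b' hb' hb'x
    have : D + 1 ≤ D := le_csSup ⟨s, bdd c s hlongest x⟩ ⟨b', hb', hb'x⟩
    omega
  -- Step 1: c (b 0) = c ⊥
  have hb0 : c (b 0) = c ⊥ := by
    by_contra hne
    refine hnot (Fin.cons ⊥ b) ⟨Fin.strictMono_iff_lt_succ.mpr ?_, ?_⟩ ?_
    · intro i
      induction i using Fin.cases with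
      | zero =>
        simp only [Fin.castSucc_zero, Fin.cons_zero, Fin.succ_zero_eq_one]
        have h1 : (1 : Fin (D + 2)) = Fin.succ 0 := rfl
        rw [h1, Fin.cons_succ]
        exact bot_lt_iff_ne_bot.mpr (fun h => hne (by rw [h]))
      | succ j =>
        rw [← Fin.succ_castSucc, Fin.cons_succ, Fin.cons_succ]
        exact hb.1 (Fin.castSucc_lt_succ (i := j))
    · intro i
      induction i using Fin.cases with
      | zero =>
        simp only [Fin.castSucc_zero, Fin.cons_zero, Fin.succ_zero_eq_one]
        have h1 : (1 : Fin (D + 2)) = Fin.succ 0 := rfl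
        rw [h1, Fin.cons_succ]
        exact fun h => hne h.symm
      | succ j =>
        rw [← Fin.succ_castSucc, Fin.cons_succ, Fin.cons_succ]
        exact hb.2 j
    · intro i
      induction i using Fin.cases with
      | zero => simp
      | succ j => rw [Fin.cons_succ]; exact hbx j
  -- Step 2: c (b (last D)) = c x
  have hbD : c (b (Fin.last D)) = c x := by
    by_contra hne
    refine hnot (Fin.snoc b x) ⟨Fin.strictMono_iff_lt_succ.mpr ?_, ?_⟩ ?_
    · intro i
      induction i using Fin.lastCases with
      | last =>
        rw [Fin.succ_last, Fin.snoc_last, Fin.snoc_castSucc]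
        exact lt_of_le_of_ne (hbx _) (fun h => hne (by rw [h]))
      | cast j =>
        rw [Fin.snoc_castSucc, Fin.succ_castSucc, Fin.snoc_castSucc]
        exact hb.1 (Fin.castSucc_lt_succ (i := j))
    · intro i
      induction i using Fin.lastCases with
      | last =>
        rw [Fin.succ_last, Fin.snoc_last, Fin.snoc_castSucc]
        exact hne
      | cast j =>
        rw [Fin.snoc_castSucc, Fin.succ_castSucc, Fin.snoc_castSucc]
        exact hb.2 j
    · intro i
      induction i using Fin.lastCases with
      | last => rw [Fin.snoc_last]
      | cast j => rw [Fin.snoc_castSucc]; exact hbx j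
  -- Step 3: parity argument
  have hlast : Fin.last D = (⟨D, by omega⟩ : Fin (D + 1)) := rfl
  rw [hlast] at hbD
  rw [alt_label c hchain D (by omega), h0]
  rw [alt_label c hb D (by omega), hb0] at hbD
  exact hbD

end Aux

/-- Every finite 2-poset with a least element is homomorphically equivalent to its
longest alternating 2-chain: the map `x ↦ a (altDepth x)` is a homomorphism `P → A`
and the inclusion `A → P` is a homomorphism. -/
theorem stmt10 {P : Type*} [PartialOrder P] [OrderBot P] [Fintype P] (c : P → Bool)
    (s : ℕ) (a : Fin (s + 1) → P) (h0 : a 0 = ⊥) (hchain : IsAltChain c a)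
    (hlongest : ∀ (d : ℕ) (b : Fin (d + 1) → P), IsAltChain c b → d ≤ s) :
    (∃ h : P → Fin (s + 1), (∀ x, (h x : ℕ) = altDepth c x) ∧
      Monotone h ∧ ∀ x, c (a (h x)) = c x) ∧
    Monotone a := by
  refine ⟨⟨fun x => ⟨altDepth c x, Nat.lt_succ_of_le (altDepth_le c s hlongest x)⟩,
    fun x => rfl, ?_, fun x => label_eq c s a h0 hchain hlongest x⟩, hchain.1.monotone⟩
  intro x y hxy
  exact Fin.mk_le_mk.mpr (altDepth_mono c s hlongest hxy)
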